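/- Let M be a loopfree matroid on finite ground set E with rank(M) ≥ 2, and let H_G := U_{|G|,G} ⊕ U_{|G^c|−1,G^c} be a corank-one matroid on E (|G| ≤ |E|−2). Then the matroid intersection M ∧ H_G has a loop if and only if M has a rank-one flat F with F ∪ G = E. -/

import Mathlib

open Matroid Set
open scoped Classical

variable {α : Type*}

/-- A circuit of a matroid: a minimal dependent set. -/
def Matroid.Circuit' (M : Matroid α) (C : Set α) : Prop :=
  M.Dep C ∧ ∀ D, D ⊂ C → M.Indep D

/-- The cyclic part `cyc_M(F)` of a set `F`: the union of all circuits of `M` contained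
in `F`. -/
def Matroid.cyc (M : Matroid α) (F : Set α) : Set α :=
  ⋃₀ {C | M.Circuit' C ∧ C ⊆ F}

/-- The (extended) rank of a set in a matroid: the supremum of the cardinalities of the
independent subsets. -/
noncomputable def Matroid.eRk' (M : Matroid α) (X : Set α) : ℕ∞ :=
  ⨆ I ∈ {I | M.Indep I ∧ I ⊆ X}, I.encard

/-- The rank of a matroid. -/
noncomputable def Matroid.rk' (M : Matroid α) : ℕ∞ := M.eRk' M.E

/-- A matroid is loopfree if every element of the ground set is independent. -/
def Matroid.Loopless' (M : Matroid α) : Prop := ∀ e ∈ M.E, M.Indep {e}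

/-- `U` is the matroid union `M ∨ N`: its independent sets are exactly the unions of an
independent set of `M` and an independent set of `N`. -/
def IsMatroidUnion (M N U : Matroid α) : Prop :=
  U.E = M.E ∧ ∀ X, U.Indep X ↔ ∃ I J, M.Indep I ∧ N.Indep J ∧ X = I ∪ J

/-- `P` is the matroid intersection `M ∧ N := (M* ∨ N*)*`. -/
def IsMatroidInter (M N P : Matroid α) : Prop :=
  ∃ U, IsMatroidUnion M✶ N✶ U ∧ P = U✶

/-- Contraction of a set in a matroid, defined by duality: `M/A = (M* \ A)*`. -/
def Matroid.contract' (M : Matroid α) (A : Set α) : Matroid α := (M✶ ↾ (M.E \ A))✶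

/-- A cyclic flat: a flat which is the union of the circuits contained in it. -/
def Matroid.CyclicFlat (M : Matroid α) (F : Set α) : Prop :=
  M.IsFlat F ∧ F = M.cyc F

/-- A nested matroid: one whose cyclic flats form a chain under inclusion. -/
def Matroid.Nested (M : Matroid α) : Prop := IsChain (· ⊆ ·) {F | M.CyclicFlat F}

/-- `U` is the uniform matroid of rank `r` on the ground set `S`: its bases are exactly the
`r`-element subsets of `S`. -/
def IsUnifOn (S : Set α) (r : ℕ) (U : Matroid α) : Prop :=
  U.E = S ∧ ∀ B, U.IsBase B ↔ B ⊆ S ∧ B.encard = r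

/-- `H` is the corank-one matroid `H_G := U_{|G|,G} ⊕ U_{|Gᶜ|-1,Gᶜ}` on the ground set
`univ` whose set of coloops is `G`. -/
def IsHG (G : Set α) (H : Matroid α) : Prop :=
  ∃ (U' : Matroid α) (hd : Disjoint (Matroid.freeOn G).E U'.E),
    IsUnifOn Gᶜ (Gᶜ.ncard - 1) U' ∧ H = (Matroid.freeOn G).disjointSum U' hd

/-- `P` is the iterated matroid intersection of a list of matroids (the empty intersection
being the free matroid `U_{n,n}` on the ground set `univ`). -/
def IsFoldInter : List (Matroid α) → Matroid α → Prop
  | [], P => P = Matroid.freeOn Set.univ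
  | M :: l, P => ∃ Q, IsFoldInter l Q ∧ IsMatroidInter M Q P

lemma Matroid.flat_closure'' (M : Matroid α) (X : Set α) : M.IsFlat (M.closure X) := by
  rw [Matroid.closure_def, Set.sInter_eq_iInter]
  haveI : Nonempty {F // F ∈ {F | M.IsFlat F ∧ X ∩ M.E ⊆ F}} :=
    ⟨⟨M.E, M.ground_isFlat, Set.inter_subset_right⟩⟩
  exact Matroid.IsFlat.iInter fun F => F.2.1

lemma two_le_iff_one_lt' (x : ℕ∞) : 2 ≤ x ↔ 1 < x := by
  rw [← one_add_one_eq_two, ENat.add_one_le_iff (by simp)]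

/-- For a loopfree matroid `M` of rank at least `2` and a corank-one matroid `H_G`, the
matroid intersection `M ∧ H_G` has a loop if and only if `M` has a rank-one flat `F`
with `F ∪ G = E`. -/
theorem matroidInter_HG_hasLoop_iff [Fintype α] (M H P : Matroid α) (G : Set α)
    (hME : M.E = Set.univ) (hMl : M.Loopless') (hMr : (2 : ℕ∞) ≤ M.rk')
    (hG : G.ncard ≤ Fintype.card α - 2) (hH : IsHG G H)
    (hP : IsMatroidInter M H P) :
    (∃ e, P.Dep {e}) ↔ ∃ F, M.IsFlat F ∧ M.eRk' F = 1 ∧ F ∪ G = Set.univ := by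
  obtain ⟨U', hd, ⟨hU'E, hU'B⟩, rfl⟩ := hH
  obtain ⟨U, ⟨hUE, hUI⟩, rfl⟩ := hP
  -- basic cardinality facts
  have hpair : ∃ I : Set α, M.Indep I ∧ 2 ≤ I.encard := by
    by_contra h
    push_neg at h
    have hle : M.rk' ≤ 1 := by
      refine iSup₂_le fun I hI => ?_
      have h2 := h I hI.1
      by_contra hc
      rw [not_le] at hc
      exact absurd ((two_le_iff_one_lt' _).2 hc) (not_le.2 h2)
    exact absurd (hMr.trans hle) (by norm_num)
  have hcard2 : 2 ≤ Fintype.card α := by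
    obtain ⟨I, hI, h2⟩ := hpair
    rw [two_le_iff_one_lt', Set.one_lt_encard_iff] at h2
    obtain ⟨a, b, -, -, hab⟩ := h2
    haveI : Nontrivial α := ⟨a, b, hab⟩
    exact Fintype.one_lt_card_iff_nontrivial.2 this
  have hGcc : 2 ≤ Gᶜ.ncard := by
    have h1 : G.ncard + Gᶜ.ncard = Fintype.card α := by
      rw [Set.ncard_add_ncard_compl, Nat.card_eq_fintype_card]
    omega
  have hGcne : Gᶜ.Nonempty := by
    rw [← Set.ncard_pos]; omega
  have hME' : ∀ x : α, x ∈ M.E := fun x => by rw [hME]; trivial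
  have hnl : ∀ e : α, M.Indep {e} := fun e => hMl e (hME' e)
  have hUEu : U.E = Set.univ := by rw [hUE, Matroid.dual_ground, hME]
  have hHmE : ((Matroid.freeOn G).disjointSum U' hd).E = Set.univ := by
    simp [hU'E]
  -- singletons of `Gᶜ` are bases of the dual of `H`
  have hbase : ∀ x ∈ Gᶜ, ((Matroid.freeOn G).disjointSum U' hd)✶.IsBase {x} := by
    intro x hx
    rw [Matroid.dual_isBase_iff (by rw [hHmE]; exact Set.subset_univ _), hHmE,
      Matroid.disjointSum_isBase_iff]
    refine ⟨?_, ?_, ?_⟩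
    · rw [Matroid.freeOn_ground, Matroid.freeOn_isBase_iff]
      ext y
      simp only [Set.mem_inter_iff, Set.mem_diff, Set.mem_univ, true_and,
        Set.mem_singleton_iff]
      exact ⟨fun h => h.2, fun hy => ⟨fun h => hx (h ▸ hy), hy⟩⟩
    · have hset : (Set.univ \ {x}) ∩ U'.E = Gᶜ \ {x} := by
        rw [hU'E]; ext y; simp only [Set.mem_inter_iff, Set.mem_diff, Set.mem_univ, true_and,
          Set.mem_compl_iff, Set.mem_singleton_iff]; tauto
      rw [hset, hU'B]
      refine ⟨Set.diff_subset, ?_⟩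
      rw [Set.encard_diff_singleton_of_mem hx, ← Set.Finite.cast_ncard_eq (Set.toFinite Gᶜ),
        ENat.coe_sub, Nat.cast_one]
    · rw [Matroid.freeOn_ground, hU'E]
      intro y _
      by_cases hyG : y ∈ G
      · exact Or.inl hyG
      · exact Or.inr hyG
  -- independent sets of the dual of `H` are subsets of `Gᶜ` of size at most one
  have hHind : ∀ J, ((Matroid.freeOn G).disjointSum U' hd)✶.Indep J →
      J ⊆ Gᶜ ∧ (J = ∅ ∨ ∃ f, f ∈ Gᶜ ∧ J = {f}) := by
    intro J hJ
    rw [Matroid.dual_indep_iff_exists'] at hJ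
    obtain ⟨hJE, B, hB, hdisj⟩ := hJ
    rw [Matroid.disjointSum_isBase_iff] at hB
    obtain ⟨hBG, hBU', hBE⟩ := hB
    rw [Matroid.freeOn_ground, Matroid.freeOn_isBase_iff] at hBG
    have hGB : G ⊆ B := by
      intro y hy
      have hmem : y ∈ B ∩ G := by rw [hBG]; exact hy
      exact hmem.1
    have hJGc : J ⊆ Gᶜ := fun y hy hyG => Set.disjoint_left.1 hdisj hy (hGB hyG)
    refine ⟨hJGc, ?_⟩
    obtain ⟨hsub, hcardB⟩ := (hU'B _).1 hBU'
    have hncardB : (B ∩ U'.E).ncard = Gᶜ.ncard - 1 := by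
      rw [← Set.Finite.cast_ncard_eq (Set.toFinite _)] at hcardB
      exact_mod_cast hcardB
    have hJsub : J ⊆ Gᶜ \ (B ∩ U'.E) := by
      intro y hy
      exact ⟨hJGc hy, fun hyB => Set.disjoint_left.1 hdisj hy hyB.1⟩
    have h1 : (Gᶜ \ (B ∩ U'.E)).ncard + (B ∩ U'.E).ncard = Gᶜ.ncard := by
      refine Set.ncard_diff_add_ncard_of_subset ?_ (Set.toFinite _)
      rw [hU'E]; exact Set.inter_subset_right
    have hJle : J.ncard ≤ (Gᶜ \ (B ∩ U'.E)).ncard :=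
      Set.ncard_le_ncard hJsub (Set.toFinite _)
    have hJ1 : J.ncard ≤ 1 := by omega
    rcases J.eq_empty_or_nonempty with rfl | hne
    · exact Or.inl rfl
    · right
      have hpos : 0 < J.ncard := (Set.ncard_pos (Set.toFinite _)).2 hne
      have : J.ncard = 1 := le_antisymm hJ1 hpos
      obtain ⟨f, rfl⟩ := Set.ncard_eq_one.1 this
      exact ⟨f, hJGc rfl, rfl⟩
  constructor
  · -- backwards: from a loop of `P` construct the flat
    rintro ⟨e, hdep⟩
    rw [Matroid.dep_iff] at hdep
    obtain ⟨hni, -⟩ := hdep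
    have hcol : ∀ B, U.IsBase B → e ∈ B := by
      intro B hB
      by_contra heB
      exact hni (Matroid.dual_indep_iff_exists'.2
        ⟨by rw [hUEu]; exact Set.subset_univ _, B, hB, Set.disjoint_singleton_left.2 heB⟩)
    refine ⟨M.closure {e}, M.flat_closure'' {e}, ?_, ?_⟩
    · -- the closure of a nonloop has rank one
      apply le_antisymm
      · refine iSup₂_le fun I hI => ?_
        obtain ⟨hIind, hIcl⟩ := hI
        by_contra hI2
        rw [not_le, ← two_le_iff_one_lt', two_le_iff_one_lt', Set.one_lt_encard_iff] at hI2
        obtain ⟨x, y, hx, hy, hxy⟩ := hI2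
        have hpair : M.Indep {x, y} := hIind.subset (by
          intro z hz
          rcases hz with rfl | rfl
          · exact hx
          · exact hy)
        have hyx : y ∉ M.closure {x} := by
          have h1 := hpair.notMem_closure_sdiff_of_mem (show y ∈ ({x, y} : Set α) by simp)
          have h2 : ({x, y} : Set α) \ {y} = {x} := by
            ext z
            simp only [Set.mem_diff, Set.mem_insert_iff, Set.mem_singleton_iff]
            constructor
            · rintro ⟨rfl | rfl, hz⟩
              · rfl
              · exact absurd rfl hz
            · rintro rfl
              exact ⟨Or.inl rfl, hxy⟩
          rwa [h2] at h1
        have hxne : x ∉ M.closure ∅ := by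
          have h1 := hpair.notMem_closure_sdiff_of_mem (show x ∈ ({x, y} : Set α) by simp)
          have h2 : ({x, y} : Set α) \ {x} = {y} := by
            ext z
            simp only [Set.mem_diff, Set.mem_insert_iff, Set.mem_singleton_iff]
            constructor
            · rintro ⟨rfl | rfl, hz⟩
              · exact absurd rfl hz
              · rfl
            · rintro rfl
              exact ⟨Or.inr rfl, fun h => hxy h.symm⟩
          rw [h2] at h1
          exact fun h => h1 (M.closure_subset_closure (Set.empty_subset _) h)
        have hex : e ∈ M.closure {x} := by
          have hx' : x ∈ M.closure (insert e ∅) \ M.closure ∅ := by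
            refine ⟨by simpa using hIcl hx, hxne⟩
          have h3 := Matroid.closure_exchange hx'
          simpa using h3.1
        exact hyx ((Matroid.closure_subset_closure_of_subset_closure
          (Set.singleton_subset_iff.2 hex)) (hIcl hy))
      · have hmem : {e} ∈ {I | M.Indep I ∧ I ⊆ M.closure {e}} :=
          ⟨hnl e, M.subset_closure {e} (Set.singleton_subset_iff.2 (hME' e))⟩
        have hle := le_iSup₂ (f := fun I (_ : I ∈ {I | M.Indep I ∧ I ⊆ M.closure {e}}) =>
          I.encard) {e} hmem
        simpa [Matroid.eRk'] using hle
    · -- the union with `G` is everything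
      have hGcl : Gᶜ ⊆ M.closure {e} := by
        intro f hf
        by_contra hfcl
        have hind2 : M.Indep (insert f {e}) := by
          rw [(hnl e).insert_indep_iff]
          exact Or.inl ⟨hME' f, hfcl⟩
        have hef : e ≠ f := by
          rintro rfl
          exact hfcl (M.mem_closure_of_mem rfl (Set.singleton_subset_iff.2 (hME' e)))
        obtain ⟨B, hB, hsubB⟩ := hind2.exists_isBase_superset
        have hBc : M✶.IsBase (M.E \ B) := hB.compl_isBase_dual
        have heB : e ∈ B := hsubB (by simp)
        have hfB : f ∈ B := hsubB (by simp)
        have hXind : U.Indep ((M.E \ B) ∪ {f}) :=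
          (hUI _).2 ⟨M.E \ B, {f}, hBc.indep, (hbase f hf).indep, rfl⟩
        obtain ⟨BU, hBU, hsubBU⟩ := hXind.exists_isBase_superset
        have heBU : e ∈ BU := hcol BU hBU
        obtain ⟨I, J, hI, hJ, hEq⟩ := (hUI BU).1 hBU.indep
        obtain ⟨hJGc, hJcases⟩ := hHind J hJ
        have hbig : (M.E \ B ∪ {e, f}) \ J ⊆ I := by
          intro x hx
          have hxBU : x ∈ BU := by
            rcases hx.1 with h | h
            · exact hsubBU (Or.inl h)
            · rcases h with rfl | rfl
              · exact heBU
              · exact hsubBU (Or.inr rfl)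
          rw [hEq] at hxBU
          exact hxBU.resolve_right hx.2
        have hIbound : I.ncard ≤ (M.E \ B).ncard := by
          obtain ⟨B2, hB2, hIB2⟩ := hI.exists_isBase_superset
          calc I.ncard ≤ B2.ncard := Set.ncard_le_ncard hIB2 (Set.toFinite _)
            _ = (M.E \ B).ncard := hB2.ncard_eq_ncard_of_isBase hBc
        have heMB : e ∉ M.E \ B := fun h => h.2 heB
        have hfMB : f ∉ M.E \ B := fun h => h.2 hfB
        have hcard_union : (M.E \ B ∪ {e, f}).ncard = (M.E \ B).ncard + 2 := by
          rw [show M.E \ B ∪ {e, f} = insert e (insert f (M.E \ B)) by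
            ext z
            simp only [Set.mem_union, Set.mem_insert_iff, Set.mem_singleton_iff]
            tauto]
          rw [Set.ncard_insert_of_notMem (by
              simp only [Set.mem_insert_iff]
              rintro (rfl | h)
              · exact hef rfl
              · exact heMB h),
            Set.ncard_insert_of_notMem hfMB]
        have hJn : J.ncard ≤ 1 := by
          rcases hJcases with rfl | ⟨g, -, rfl⟩
          · simp
          · simp
        have hdiff : (M.E \ B ∪ {e, f}).ncard ≤ ((M.E \ B ∪ {e, f}) \ J).ncard + J.ncard := by
          have hsplit : M.E \ B ∪ {e, f} ⊆ ((M.E \ B ∪ {e, f}) \ J) ∪ J := by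
            intro x hx
            by_cases hxJ : x ∈ J
            · exact Or.inr hxJ
            · exact Or.inl ⟨hx, hxJ⟩
          calc (M.E \ B ∪ {e, f}).ncard
              ≤ (((M.E \ B ∪ {e, f}) \ J) ∪ J).ncard :=
                Set.ncard_le_ncard hsplit (Set.toFinite _)
            _ ≤ ((M.E \ B ∪ {e, f}) \ J).ncard + J.ncard := Set.ncard_union_le _ _
        have hfin := Set.ncard_le_ncard hbig (Set.toFinite _)
        omega
      ext x
      simp only [Set.mem_union, Set.mem_univ, iff_true]
      by_cases hxG : x ∈ G
      · exact Or.inr hxG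
      · exact Or.inl (hGcl hxG)
  · -- forwards: from the flat construct a loop of `P`
    rintro ⟨F, hFflat, hFr, hFG⟩
    have hGcF : Gᶜ ⊆ F := by
      intro x hx
      have hxm : x ∈ F ∪ G := hFG ▸ Set.mem_univ x
      exact hxm.resolve_right hx
    obtain ⟨e, he⟩ := hGcne
    have hFone : ∀ I, M.Indep I → I ⊆ F → I.encard ≤ 1 := by
      intro I hIi hIF
      have hle := le_iSup₂ (f := fun I (_ : I ∈ {I | M.Indep I ∧ I ⊆ F}) => I.encard)
        I ⟨hIi, hIF⟩
      rwa [← Matroid.eRk', hFr] at hle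
    have hcl : ∀ f ∈ Gᶜ, f ∈ M.closure {e} := by
      intro f hf
      by_contra hfcl
      have hind : M.Indep (insert f {e}) := by
        rw [(hnl e).insert_indep_iff]
        exact Or.inl ⟨hME' f, hfcl⟩
      have hfe : f ≠ e := by
        rintro rfl
        exact hfcl (M.mem_closure_of_mem rfl (Set.singleton_subset_iff.2 (hME' f)))
      have h2 : (insert f {e} : Set α).encard = 2 := Set.encard_pair hfe
      have hle := hFone _ hind
        (Set.insert_subset (hGcF hf) (Set.singleton_subset_iff.2 (hGcF he)))
      rw [h2] at hle
      norm_num at hle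
    have hcol : ∀ X, U.Indep X → e ∉ X → U.Indep (insert e X) := by
      intro X hX heX
      obtain ⟨I, J, hI, hJ, rfl⟩ := (hUI X).1 hX
      obtain ⟨hJGc, hJcases⟩ := hHind J hJ
      rcases hJcases with rfl | ⟨f, hfGc, rfl⟩
      · refine (hUI _).2 ⟨I, {e}, hI, (hbase e he).indep, ?_⟩
        rw [Set.union_empty, Set.insert_eq, Set.union_comm]
      · have hef : e ≠ f := fun h => heX (by rw [h]; exact Set.mem_union_right _ rfl)
        have heI : e ∉ I := fun h => heX (Set.mem_union_left _ h)
        have hI' : M✶.Indep (I \ {f}) := hI.subset Set.diff_subset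
        have hspan : M.Spanning (M.E \ (I \ {f})) :=
          (Matroid.coindep_iff_compl_spanning (by rw [hME]; exact Set.subset_univ _)).1 hI'
        have hfcl : f ∈ M.closure {e} := hcl f hfGc
        have heS : e ∈ (M.E \ (I \ {f})) \ {f} :=
          ⟨⟨hME' e, fun h => heI h.1⟩, hef⟩
        have hsub2 : M.E \ (I \ {f}) ⊆ M.closure ((M.E \ (I \ {f})) \ {f}) := by
          intro x hx
          rcases eq_or_ne x f with rfl | hxf
          · exact M.closure_subset_closure (Set.singleton_subset_iff.2 heS) hfcl
          · exact M.subset_closure _ (Set.diff_subset.trans Set.diff_subset) ⟨hx, hxf⟩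
        have hspan2 : M.Spanning ((M.E \ (I \ {f})) \ {f}) := by
          refine ⟨?_, Set.diff_subset.trans Set.diff_subset⟩
          apply subset_antisymm (M.closure_subset_ground _)
          have h4 := Matroid.closure_subset_closure_of_subset_closure hsub2
          exact fun x hx => h4 (by rw [hspan.closure_eq]; exact hx)
        have hIf : M✶.Indep (I \ {f} ∪ {f}) := by
          have hc : M.E \ (I \ {f} ∪ {f}) = (M.E \ (I \ {f})) \ {f} := by
            rw [← Set.diff_diff]
          exact (Matroid.coindep_iff_compl_spanning
            (by rw [hME]; exact Set.subset_univ _)).2 (hc ▸ hspan2)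
        refine (hUI _).2 ⟨I \ {f} ∪ {f}, {e}, hIf, (hbase e he).indep, ?_⟩
        ext x
        simp only [Set.mem_insert_iff, Set.mem_union, Set.mem_diff, Set.mem_singleton_iff]
        tauto
    refine ⟨e, ?_⟩
    rw [Matroid.dep_iff]
    constructor
    · intro hind
      rw [Matroid.dual_indep_iff_exists'] at hind
      obtain ⟨-, B, hB, hdisj⟩ := hind
      have heB : e ∉ B := Set.disjoint_left.1 hdisj rfl
      have hins := hcol B hB.indep heB
      exact (hB.insert_dep ⟨by rw [hUEu]; trivial, heB⟩).not_indep hins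
    · rw [Matroid.dual_ground, hUEu]
      exact Set.subset_univ _
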